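/- arXiv:2512.15455 — 3 statements merged into one kernel-verified Lean document; each statement's English description precedes it below -/
import Mathlib

section
/- If Ω is an ε-embedding of range(W) and W = QR with (ΩQ)ᵀ(ΩQ) = I (a randomized QR factorization), then the condition number of Q satisfies Cond(Q) ≤ √((1+ε)/(1-ε)). -/
open Matrix

noncomputable def eunorm {k : ℕ} (x : Fin k → ℝ) : ℝ := Real.sqrt (x ⬝ᵥ x)

lemma dot_self_nonneg {k : ℕ} (x : Fin k → ℝ) : 0 ≤ x ⬝ᵥ x :=
  Finset.sum_nonneg fun i _ => mul_self_nonneg (x i)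

lemma eunorm_sq {k : ℕ} (x : Fin k → ℝ) : eunorm x ^ 2 = x ⬝ᵥ x :=
  Real.sq_sqrt (dot_self_nonneg x)

lemma dot_mulVec_self {a b : ℕ} (M : Matrix (Fin a) (Fin b) ℝ) (x : Fin b → ℝ) :
    (M.mulVec x) ⬝ᵥ (M.mulVec x) = x ⬝ᵥ (Mᵀ * M).mulVec x := by
  rw [← Matrix.mulVec_mulVec, Matrix.dotProduct_mulVec x Mᵀ, Matrix.vecMul_transpose]

/-- The `j`-th largest singular value of a matrix. -/
noncomputable def sval {n m : ℕ} (A : Matrix (Fin n) (Fin m) ℝ) (j : Fin m) : ℝ :=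
  Real.sqrt
    (((Matrix.isHermitian_conjTranspose_mul_self A).eigenvalues ∘
      Tuple.sort (Matrix.isHermitian_conjTranspose_mul_self A).eigenvalues) (Fin.rev j))

/-- Condition number σ_max / σ_min of a tall matrix. -/
noncomputable def condNum {n m : ℕ} (hm : 0 < m) (A : Matrix (Fin n) (Fin m) ℝ) : ℝ :=
  sval A ⟨0, hm⟩ / sval A ⟨m - 1, by omega⟩

/-- If Ω is an ε-embedding of range(W) and W = QR is a randomized QR factorization
with (ΩQ)ᵀ(ΩQ) = I, then Cond(Q) ≤ √((1+ε)/(1-ε)). -/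
theorem stmt2 {n m l : ℕ} (hm : 0 < m)
    (W Q : Matrix (Fin n) (Fin m) ℝ) (R : Matrix (Fin m) (Fin m) ℝ) (ε : ℝ)
    (hε0 : 0 < ε) (hε1 : ε < 1)
    (hfull : ∀ c : Fin m → ℝ, W.mulVec c = 0 → c = 0)
    (Ω : Matrix (Fin l) (Fin n) ℝ)
    (hemb : ∀ w ∈ LinearMap.range W.mulVecLin,
      (1 - ε) * eunorm w ^ 2 ≤ eunorm (Ω.mulVec w) ^ 2 ∧
      eunorm (Ω.mulVec w) ^ 2 ≤ (1 + ε) * eunorm w ^ 2)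
    (hQR : W = Q * R) (hRtri : R.BlockTriangular id) (hRinv : IsUnit R.det)
    (horth : (Ω * Q)ᵀ * (Ω * Q) = 1) :
    condNum hm Q ≤ Real.sqrt ((1 + ε) / (1 - ε)) := by
  have h1e : (0:ℝ) < 1 - ε := by linarith
  have h2e : (0:ℝ) < 1 + ε := by linarith
  have hherm := Matrix.isHermitian_conjTranspose_mul_self Q
  -- all eigenvalues lie in [1/(1+ε), 1/(1-ε)]
  have key : ∀ i : Fin m,
      1 / (1 + ε) ≤ hherm.eigenvalues i ∧ hherm.eigenvalues i ≤ 1 / (1 - ε) := by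
    intro i
    set u : EuclideanSpace ℝ (Fin m) := hherm.eigenvectorBasis i with hu
    set v : Fin m → ℝ := (WithLp.equiv 2 _) u with hv
    have hvv : v ⬝ᵥ v = 1 := by
      have hnorm : ‖u‖ = 1 := hherm.eigenvectorBasis.orthonormal.1 i
      have : (inner ℝ u u : ℝ) = 1 := by
        rw [real_inner_self_eq_norm_sq, hnorm]; norm_num
      simp only [PiLp.inner_apply, RCLike.inner_apply, conj_trivial] at this
      simpa [dotProduct, PiLp.inner_apply, hv] using this
    have heig : (Qᵀ * Q).mulVec v = hherm.eigenvalues i • v :=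
      hherm.mulVec_eigenvectorBasis i
    have hw : Q.mulVec v ∈ LinearMap.range W.mulVecLin := by
      refine ⟨R⁻¹.mulVec v, ?_⟩
      rw [Matrix.mulVecLin_apply, Matrix.mulVec_mulVec, hQR, Matrix.mul_assoc,
        Matrix.mul_nonsing_inv R hRinv, Matrix.mul_one]
    obtain ⟨hl, hr⟩ := hemb _ hw
    have e1 : eunorm (Q.mulVec v) ^ 2 = hherm.eigenvalues i := by
      rw [eunorm_sq, dot_mulVec_self, heig, dotProduct_smul, hvv]; simp
    have e2 : eunorm (Ω.mulVec (Q.mulVec v)) ^ 2 = 1 := by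
      rw [eunorm_sq, Matrix.mulVec_mulVec, dot_mulVec_self, horth]
      simpa using hvv
    rw [e1, e2] at hl hr
    constructor
    · rw [div_le_iff₀ h2e]; linarith
    · rw [le_div_iff₀ h1e]; linarith
  -- bounds on singular values
  have svb : ∀ j : Fin m,
      Real.sqrt (1 / (1 + ε)) ≤ sval Q j ∧ sval Q j ≤ Real.sqrt (1 / (1 - ε)) := by
    intro j
    obtain ⟨k1, k2⟩ := key ((Tuple.sort hherm.eigenvalues) (Fin.rev j))
    exact ⟨Real.sqrt_le_sqrt k1, Real.sqrt_le_sqrt k2⟩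
  have hlow : 0 < Real.sqrt (1 / (1 + ε)) := Real.sqrt_pos.mpr (by positivity)
  obtain ⟨hb1, hb2⟩ := svb ⟨0, hm⟩
  obtain ⟨hb3, hb4⟩ := svb ⟨m - 1, by omega⟩
  have : condNum hm Q ≤ Real.sqrt (1 / (1 - ε)) / Real.sqrt (1 / (1 + ε)) :=
    div_le_div₀ (Real.sqrt_nonneg _) hb2 hlow hb3
  refine this.trans (le_of_eq ?_)
  rw [← Real.sqrt_div (by positivity)]
  congr 1
  field_simp
end

section
/- If Ω is an ε-embedding of range(W) + span(b) and x* minimizes ‖ΩWx - Ωb‖ over x ∈ ℝᵐ, then ‖Wx* - b‖ ≤ √((1+ε)/(1-ε)) · min_{x ∈ ℝᵐ} ‖Wx - b‖. -/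
open Matrix

lemma eunorm_nonneg {k : ℕ} (x : Fin k → ℝ) : 0 ≤ eunorm x := Real.sqrt_nonneg _

lemma mem_sup {n m : ℕ} (W : Matrix (Fin n) (Fin m) ℝ) (b : Fin n → ℝ) (c : Fin m → ℝ) :
    W.mulVec c - b ∈ LinearMap.range W.mulVecLin ⊔ Submodule.span ℝ {b} := by
  rw [sub_eq_add_neg]
  exact Submodule.add_mem_sup (LinearMap.mem_range_self _ c)
    (Submodule.neg_mem _ (Submodule.mem_span_singleton_self b))

/-- If Ω is an ε-embedding of range(W) + span(b) and x* minimizes ‖ΩWx - Ωb‖, then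
‖Wx* - b‖ ≤ √((1+ε)/(1-ε)) · min_x ‖Wx - b‖. -/
theorem stmt8 {n m l : ℕ} (W : Matrix (Fin n) (Fin m) ℝ) (b : Fin n → ℝ)
    (ε : ℝ) (hε0 : 0 < ε) (hε1 : ε < 1)
    (hfull : ∀ c : Fin m → ℝ, W.mulVec c = 0 → c = 0)
    (Ω : Matrix (Fin l) (Fin n) ℝ)
    (hemb : ∀ w ∈ LinearMap.range W.mulVecLin ⊔ Submodule.span ℝ {b},
      (1 - ε) * eunorm w ^ 2 ≤ eunorm (Ω.mulVec w) ^ 2 ∧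
      eunorm (Ω.mulVec w) ^ 2 ≤ (1 + ε) * eunorm w ^ 2)
    (xstar : Fin m → ℝ)
    (hmin : ∀ x : Fin m → ℝ,
      eunorm ((Ω * W).mulVec xstar - Ω.mulVec b) ≤ eunorm ((Ω * W).mulVec x - Ω.mulVec b)) :
    ∀ x : Fin m → ℝ,
      eunorm (W.mulVec xstar - b) ≤ Real.sqrt ((1 + ε) / (1 - ε)) * eunorm (W.mulVec x - b) := by
  intro x
  have h1ε : (0:ℝ) < 1 - ε := by linarith
  have key : ∀ c : Fin m → ℝ, Ω.mulVec (W.mulVec c - b) = (Ω * W).mulVec c - Ω.mulVec b := by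
    intro c; rw [Matrix.mulVec_sub, Matrix.mulVec_mulVec]
  have hlo := (hemb _ (mem_sup W b xstar)).1
  have hhi := (hemb _ (mem_sup W b x)).2
  rw [key] at hlo hhi
  have hmin2 : eunorm ((Ω * W).mulVec xstar - Ω.mulVec b) ^ 2 ≤
      eunorm ((Ω * W).mulVec x - Ω.mulVec b) ^ 2 :=
    pow_le_pow_left₀ (eunorm_nonneg _) (hmin x) 2
  have hsq : eunorm (W.mulVec xstar - b) ^ 2 ≤ (1 + ε) / (1 - ε) * eunorm (W.mulVec x - b) ^ 2 := by
    rw [div_mul_eq_mul_div, le_div_iff₀ h1ε, mul_comm]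
    calc (1 - ε) * eunorm (W.mulVec xstar - b) ^ 2 ≤ (1 + ε) * eunorm (W.mulVec x - b) ^ 2 := by
          linarith
      _ = (1 + ε) * eunorm (W.mulVec x - b) ^ 2 := rfl
  calc eunorm (W.mulVec xstar - b) = Real.sqrt (eunorm (W.mulVec xstar - b) ^ 2) :=
        (Real.sqrt_sq (eunorm_nonneg _)).symm
    _ ≤ Real.sqrt ((1 + ε) / (1 - ε) * eunorm (W.mulVec x - b) ^ 2) := Real.sqrt_le_sqrt hsq
    _ = Real.sqrt ((1 + ε) / (1 - ε)) * eunorm (W.mulVec x - b) := by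
        rw [Real.sqrt_mul (by positivity), Real.sqrt_sq (eunorm_nonneg _)]
end

section
/- For a randomized Householder reflector P = I - β u(Ψu)ᵀΨ with β = 2/‖Ψu‖², there exists a standard Householder reflector P' = I - β(Ψu)(Ψu)ᵀ on ℝ^{ℓ'} such that ΨP = P'Ψ, and P' is orthogonal and symmetric. -/
open Matrix

/-- For the randomized Householder reflector P = I - β u(Ψu)ᵀΨ with β = 2/‖Ψu‖², the
standard Householder reflector P' = I - β(Ψu)(Ψu)ᵀ satisfies ΨP = P'Ψ, and P' is
symmetric and orthogonal. -/
theorem stmt11 {n l' : ℕ} (Ψ : Matrix (Fin l') (Fin n) ℝ) (u : Fin n → ℝ)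
    (hu : Ψ.mulVec u ≠ 0) :
    let β : ℝ := 2 / (Ψ.mulVec u ⬝ᵥ Ψ.mulVec u)
    let P : Matrix (Fin n) (Fin n) ℝ := 1 - β • (vecMulVec u (Ψ.mulVec u) * Ψ)
    let P' : Matrix (Fin l') (Fin l') ℝ := 1 - β • vecMulVec (Ψ.mulVec u) (Ψ.mulVec u)
    Ψ * P = P' * Ψ ∧ P'ᵀ = P' ∧ P' * P'ᵀ = 1 := by
  intro β P P'
  set v : Fin l' → ℝ := Ψ.mulVec u with hv
  have hvv : v ⬝ᵥ v ≠ 0 := by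
    intro h
    exact hu (by simpa [hv] using (dotProduct_self_eq_zero).mp h)
  have hβ : β * (v ⬝ᵥ v) = 2 := by
    show 2 / (v ⬝ᵥ v) * (v ⬝ᵥ v) = 2; exact div_mul_cancel₀ 2 hvv
  have hkey : Ψ * vecMulVec u v = vecMulVec v v := by
    ext i j
    simp [mul_apply, vecMulVec_apply, hv, mulVec, dotProduct, Finset.sum_mul]
    exact Finset.sum_congr rfl (fun _ _ => by ring)
  have hsq : vecMulVec v v * vecMulVec v v = (v ⬝ᵥ v) • vecMulVec v v := by
    ext i j
    simp [mul_apply, vecMulVec_apply, dotProduct, Finset.mul_sum, Finset.sum_mul]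
    apply Finset.sum_congr rfl
    intros; ring
  have hsymm : P'ᵀ = P' := by
    simp [P', transpose_sub, transpose_smul, vecMulVec_eq Unit, Matrix.transpose_mul]
  refine ⟨?_, hsymm, ?_⟩
  · simp only [P, P', Matrix.mul_sub, Matrix.sub_mul, Matrix.mul_one, Matrix.one_mul,
      Matrix.mul_smul, Matrix.smul_mul, ← Matrix.mul_assoc, ← hv, hkey]
  · rw [hsymm]
    simp only [P', Matrix.mul_sub, Matrix.sub_mul, Matrix.mul_one, Matrix.one_mul,
      Matrix.mul_smul, Matrix.smul_mul, hsq, smul_smul]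
    rw [← hv, hsq, smul_smul β (v ⬝ᵥ v), hβ]
    module
end
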